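/- The function u(t,x) := Q(x − (c⁴ + 10μ²c²)·t) solves the 5th-order Gardner equation: for all (t,x) ∈ ℝ², u_t + u_{5x} + 10μ²u_{3x} + 20μ·u·u_{3x} + 10u²u_{3x} + 120μ³u·u_x + 180μ²u²u_x + 120μu³u_x + 10u_x³ + 30u⁴u_x + 40μ·u_x·u_{xx} + 40u·u_x·u_{xx} = 0 (here u_t = ∂u/∂t and u_x, u_{xx}, u_{kx} are iterated partial derivatives in x). -/

import Mathlib

open Real

/-- The Gardner soliton profile. -/
noncomputable def gardnerQ (μ c : ℝ) (z : ℝ) : ℝ :=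
  c ^ 2 / (2 * μ + Real.sqrt (4 * μ ^ 2 + c ^ 2) * Real.cosh (c * z))

/-- Partial derivative in `x`. -/
noncomputable def pdx (u : ℝ → ℝ → ℝ) (t x : ℝ) : ℝ := deriv (u t) x

/-- `n`-th iterated partial derivative in `x`. -/
noncomputable def pdxn (n : ℕ) (u : ℝ → ℝ → ℝ) (t x : ℝ) : ℝ := deriv^[n] (u t) x

/-- Partial derivative in `t`. -/
noncomputable def pdt (u : ℝ → ℝ → ℝ) (t x : ℝ) : ℝ := deriv (fun s => u s x) t

/- ### Auxiliary development for the Gardner soliton -/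

/-- First derivative of the Gardner profile. -/
noncomputable def g1 (μ c z : ℝ) : ℝ :=
  -(c ^ 3 * Real.sqrt (4 * μ ^ 2 + c ^ 2) * Real.sinh (c * z)) /
    (2 * μ + Real.sqrt (4 * μ ^ 2 + c ^ 2) * Real.cosh (c * z)) ^ 2

/-- Second derivative of the Gardner profile (as a polynomial in `Q`). -/
noncomputable def g2 (μ c z : ℝ) : ℝ :=
  c ^ 2 * gardnerQ μ c z - 6 * μ * (gardnerQ μ c z) ^ 2 - 2 * (gardnerQ μ c z) ^ 3

/-- Third derivative. -/
noncomputable def g3 (μ c z : ℝ) : ℝ :=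
  (c ^ 2 - 12 * μ * gardnerQ μ c z - 6 * (gardnerQ μ c z) ^ 2) * g1 μ c z

/-- Fourth derivative. -/
noncomputable def g4 (μ c z : ℝ) : ℝ :=
  (-12 * μ - 12 * gardnerQ μ c z) * (g1 μ c z) ^ 2 +
    (c ^ 2 - 12 * μ * gardnerQ μ c z - 6 * (gardnerQ μ c z) ^ 2) * g2 μ c z

/-- Fifth derivative. -/
noncomputable def g5 (μ c z : ℝ) : ℝ :=
  -12 * (g1 μ c z) ^ 3 - 36 * (μ + gardnerQ μ c z) * g1 μ c z * g2 μ c z +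
    (c ^ 2 - 12 * μ * gardnerQ μ c z - 6 * (gardnerQ μ c z) ^ 2) ^ 2 * g1 μ c z

section aux

variable {μ c : ℝ} (hμ : 0 < μ) (hc : 0 < c)

lemma sqrt_sq' : Real.sqrt (4 * μ ^ 2 + c ^ 2) ^ 2 = 4 * μ ^ 2 + c ^ 2 :=
  Real.sq_sqrt (by positivity)

include hμ hc in
lemma sqrt_pos' : 0 < Real.sqrt (4 * μ ^ 2 + c ^ 2) :=
  Real.sqrt_pos.mpr (by positivity)

include hμ hc in
lemma denom_pos (z : ℝ) :
    0 < 2 * μ + Real.sqrt (4 * μ ^ 2 + c ^ 2) * Real.cosh (c * z) := by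
  have h1 := Real.one_le_cosh (c * z)
  have h2 := sqrt_pos' hμ hc
  nlinarith

lemma hasDerivAt_denom (z : ℝ) :
    HasDerivAt (fun w => 2 * μ + Real.sqrt (4 * μ ^ 2 + c ^ 2) * Real.cosh (c * w))
      (Real.sqrt (4 * μ ^ 2 + c ^ 2) * c * Real.sinh (c * z)) z := by
  have h1 : HasDerivAt (fun w : ℝ => c * w) c z := by
    simpa using (hasDerivAt_id z).const_mul c
  have h2 : HasDerivAt (fun w : ℝ => Real.cosh (c * w)) (Real.sinh (c * z) * c) z :=
    (Real.hasDerivAt_cosh (c * z)).comp z h1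
  have h3 := (h2.const_mul (Real.sqrt (4 * μ ^ 2 + c ^ 2))).const_add (2 * μ)
  refine h3.congr_deriv (Eq.symm ?_)
  ring

include hμ hc in
lemma hasDerivAt_gardnerQ (z : ℝ) : HasDerivAt (gardnerQ μ c) (g1 μ c z) z := by
  have h := (hasDerivAt_const z (c ^ 2)).div (hasDerivAt_denom z)
    (denom_pos hμ hc z).ne'
  have he : gardnerQ μ c = fun w =>
      c ^ 2 / (2 * μ + Real.sqrt (4 * μ ^ 2 + c ^ 2) * Real.cosh (c * w)) := rfl
  rw [he, g1]
  refine h.congr_deriv (Eq.symm ?_)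
  ring

include hμ hc in
lemma hasDerivAt_g1 (z : ℝ) : HasDerivAt (g1 μ c) (g2 μ c z) z := by
  have hD := denom_pos hμ hc z
  have h1 : HasDerivAt (fun w : ℝ => c * w) c z := by
    simpa using (hasDerivAt_id z).const_mul c
  have hnum : HasDerivAt
      (fun w => -(c ^ 3 * Real.sqrt (4 * μ ^ 2 + c ^ 2) * Real.sinh (c * w)))
      (-(c ^ 3 * Real.sqrt (4 * μ ^ 2 + c ^ 2) * (Real.cosh (c * z) * c))) z := by
    exact ((((Real.hasDerivAt_sinh (c * z)).comp z h1)).const_mul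
      (c ^ 3 * Real.sqrt (4 * μ ^ 2 + c ^ 2))).neg
  have hden : HasDerivAt
      (fun w => (2 * μ + Real.sqrt (4 * μ ^ 2 + c ^ 2) * Real.cosh (c * w)) ^ 2)
      ((2 : ℕ) * (2 * μ + Real.sqrt (4 * μ ^ 2 + c ^ 2) * Real.cosh (c * z)) ^ (2 - 1)
        * (Real.sqrt (4 * μ ^ 2 + c ^ 2) * c * Real.sinh (c * z))) z :=
    (hasDerivAt_denom z).pow 2
  have h := hnum.div hden (by positivity)
  have he : g1 μ c = fun w =>
      -(c ^ 3 * Real.sqrt (4 * μ ^ 2 + c ^ 2) * Real.sinh (c * w)) /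
        (2 * μ + Real.sqrt (4 * μ ^ 2 + c ^ 2) * Real.cosh (c * w)) ^ 2 := rfl
  rw [he]
  refine h.congr_deriv (Eq.symm ?_)
  -- algebraic identity
  rw [g2, gardnerQ]
  set A := Real.sqrt (4 * μ ^ 2 + c ^ 2) with hA_def
  set S := Real.cosh (c * z) with hS_def
  set H := Real.sinh (c * z) with hH_def
  have hA2 : A ^ 2 = 4 * μ ^ 2 + c ^ 2 := sqrt_sq'
  have hS2 : S ^ 2 = H ^ 2 + 1 := Real.cosh_sq (c * z)
  have hDne : (2 * μ + A * S) ≠ 0 := hD.ne'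
  rw [show c ^ 2 * (c ^ 2 / (2 * μ + A * S)) - 6 * μ * (c ^ 2 / (2 * μ + A * S)) ^ 2
        - 2 * (c ^ 2 / (2 * μ + A * S)) ^ 3
      = (c ^ 4 * (2 * μ + A * S) ^ 2 - 6 * μ * c ^ 4 * (2 * μ + A * S) - 2 * c ^ 6) /
        (2 * μ + A * S) ^ 3 from by field_simp]
  rw [div_eq_div_iff (by positivity) (by positivity)]
  push_cast
  linear_combination (2 * c ^ 4 * A ^ 2 * (2 * μ + A * S) ^ 4) * hS2 +
    (2 * c ^ 4 * (2 * μ + A * S) ^ 4) * hA2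

include hμ hc in
lemma g1_sq (z : ℝ) :
    (g1 μ c z) ^ 2 = c ^ 2 * (gardnerQ μ c z) ^ 2 - 4 * μ * (gardnerQ μ c z) ^ 3
      - (gardnerQ μ c z) ^ 4 := by
  have hD := denom_pos hμ hc z
  rw [g1, gardnerQ]
  set A := Real.sqrt (4 * μ ^ 2 + c ^ 2) with hA_def
  set S := Real.cosh (c * z) with hS_def
  set H := Real.sinh (c * z) with hH_def
  have hA2 : A ^ 2 = 4 * μ ^ 2 + c ^ 2 := sqrt_sq'
  have hS2 : S ^ 2 = H ^ 2 + 1 := Real.cosh_sq (c * z)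
  have hDne : (2 * μ + A * S) ≠ 0 := hD.ne'
  rw [show c ^ 2 * (c ^ 2 / (2 * μ + A * S)) ^ 2 - 4 * μ * (c ^ 2 / (2 * μ + A * S)) ^ 3
        - (c ^ 2 / (2 * μ + A * S)) ^ 4
      = (c ^ 6 * (2 * μ + A * S) ^ 2 - 4 * μ * c ^ 6 * (2 * μ + A * S) - c ^ 8) /
        (2 * μ + A * S) ^ 4 from by field_simp]
  rw [div_pow, div_eq_div_iff (by positivity) (by positivity)]
  linear_combination (-(c ^ 6 * A ^ 2 * (2 * μ + A * S) ^ 4)) * hS2 +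
    (-(c ^ 6 * (2 * μ + A * S) ^ 4)) * hA2

include hμ hc in
lemma hasDerivAt_g2 (z : ℝ) : HasDerivAt (g2 μ c) (g3 μ c z) z := by
  have h := hasDerivAt_gardnerQ hμ hc z
  have he : g2 μ c = fun w => c ^ 2 * gardnerQ μ c w - 6 * μ * (gardnerQ μ c w) ^ 2
      - 2 * (gardnerQ μ c w) ^ 3 := rfl
  rw [he, g3]
  have h' := ((h.const_mul (c ^ 2)).sub ((h.pow 2).const_mul (6 * μ))).sub
    ((h.pow 3).const_mul 2)
  refine h'.congr_deriv (Eq.symm ?_)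
  push_cast
  ring

include hμ hc in
lemma hasDerivAt_g3 (z : ℝ) : HasDerivAt (g3 μ c) (g4 μ c z) z := by
  have h := hasDerivAt_gardnerQ hμ hc z
  have h1 := hasDerivAt_g1 hμ hc z
  have he : g3 μ c = fun w =>
      (c ^ 2 - 12 * μ * gardnerQ μ c w - 6 * (gardnerQ μ c w) ^ 2) * g1 μ c w := rfl
  rw [he, g4, g2]
  have hf : HasDerivAt (fun w => c ^ 2 - 12 * μ * gardnerQ μ c w
      - 6 * (gardnerQ μ c w) ^ 2)
      (-(12 * μ * g1 μ c z) - 6 * ((2 : ℕ) * gardnerQ μ c z ^ (2 - 1) * g1 μ c z)) z :=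
    (((h.const_mul (12 * μ)).const_sub (c ^ 2)).sub ((h.pow 2).const_mul 6))
  have h' := hf.mul h1
  refine h'.congr_deriv (Eq.symm ?_)
  rw [g2]
  push_cast
  ring

include hμ hc in
lemma hasDerivAt_g4 (z : ℝ) : HasDerivAt (g4 μ c) (g5 μ c z) z := by
  have h := hasDerivAt_gardnerQ hμ hc z
  have h1 := hasDerivAt_g1 hμ hc z
  have h2 := hasDerivAt_g2 hμ hc z
  have he : g4 μ c = fun w =>
      (-12 * μ - 12 * gardnerQ μ c w) * (g1 μ c w) ^ 2 +
        (c ^ 2 - 12 * μ * gardnerQ μ c w - 6 * (gardnerQ μ c w) ^ 2) * g2 μ c w := rfl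
  rw [he, g5]
  have ha : HasDerivAt (fun w => (-12 * μ - 12 * gardnerQ μ c w) * (g1 μ c w) ^ 2)
      ((0 - 12 * g1 μ c z) * (g1 μ c z) ^ 2 +
        (-12 * μ - 12 * gardnerQ μ c z) * ((2 : ℕ) * g1 μ c z ^ (2 - 1) * g2 μ c z)) z :=
    ((hasDerivAt_const z (-12 * μ)).sub (h.const_mul 12)).mul (h1.pow 2)
  have hb : HasDerivAt (fun w =>
      (c ^ 2 - 12 * μ * gardnerQ μ c w - 6 * (gardnerQ μ c w) ^ 2) * g2 μ c w)
      ((-(12 * μ * g1 μ c z) - 6 * ((2 : ℕ) * gardnerQ μ c z ^ (2 - 1) * g1 μ c z))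
        * g2 μ c z +
        (c ^ 2 - 12 * μ * gardnerQ μ c z - 6 * (gardnerQ μ c z) ^ 2) * g3 μ c z) z :=
    ((((h.const_mul (12 * μ)).const_sub (c ^ 2)).sub ((h.pow 2).const_mul 6))).mul h2
  have h' := ha.add hb
  refine h'.congr_deriv (Eq.symm ?_)
  rw [g3, g2]
  push_cast
  ring

/-- Shift lemma. -/
lemma deriv_shift (F G : ℝ → ℝ) (hF : ∀ y, HasDerivAt F (G y) y) (s : ℝ) :
    deriv (fun x => F (x - s)) = fun x => G (x - s) := by
  funext x
  have h1 : HasDerivAt (fun x : ℝ => x - s) 1 x := (hasDerivAt_id x).sub_const s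
  have h2 := (hF (x - s)).comp x h1
  simpa [Function.comp_def] using h2.deriv

end aux

theorem gardner_soliton_solves_fifth_order_gardner
    (μ c : ℝ) (hμ : 0 < μ) (hc : 0 < c) :
    let u : ℝ → ℝ → ℝ := fun t x => gardnerQ μ c (x - (c ^ 4 + 10 * μ ^ 2 * c ^ 2) * t)
    ∀ t x : ℝ,
      pdt u t x + pdxn 5 u t x
        + 10 * μ ^ 2 * pdxn 3 u t x
        + 20 * μ * u t x * pdxn 3 u t x
        + 10 * (u t x) ^ 2 * pdxn 3 u t x
        + 120 * μ ^ 3 * u t x * pdx u t x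
        + 180 * μ ^ 2 * (u t x) ^ 2 * pdx u t x
        + 120 * μ * (u t x) ^ 3 * pdx u t x
        + 10 * (pdx u t x) ^ 3
        + 30 * (u t x) ^ 4 * pdx u t x
        + 40 * μ * pdx u t x * pdxn 2 u t x
        + 40 * u t x * pdx u t x * pdxn 2 u t x = 0 := by
  intro u t x
  set k : ℝ := c ^ 4 + 10 * μ ^ 2 * c ^ 2 with hk_def
  set z : ℝ := x - k * t with hz_def
  -- spatial derivatives
  have d1 : deriv (u t) = fun x => g1 μ c (x - k * t) :=
    deriv_shift _ _ (hasDerivAt_gardnerQ hμ hc) (k * t)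
  have d2 : deriv (deriv (u t)) = fun x => g2 μ c (x - k * t) := by
    rw [d1]; exact deriv_shift _ _ (hasDerivAt_g1 hμ hc) (k * t)
  have d3 : deriv (deriv (deriv (u t))) = fun x => g3 μ c (x - k * t) := by
    rw [d2]; exact deriv_shift _ _ (hasDerivAt_g2 hμ hc) (k * t)
  have d4 : deriv (deriv (deriv (deriv (u t)))) = fun x => g4 μ c (x - k * t) := by
    rw [d3]; exact deriv_shift _ _ (hasDerivAt_g3 hμ hc) (k * t)
  have d5 : deriv (deriv (deriv (deriv (deriv (u t))))) = fun x => g5 μ c (x - k * t) := by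
    rw [d4]; exact deriv_shift _ _ (hasDerivAt_g4 hμ hc) (k * t)
  have hpx : pdx u t x = g1 μ c z := by
    show deriv (u t) x = _
    rw [d1]
  have hp2 : pdxn 2 u t x = g2 μ c z := by
    show deriv^[2] (u t) x = _
    rw [show deriv^[2] (u t) = deriv (deriv (u t)) from rfl, d2]
  have hp3 : pdxn 3 u t x = g3 μ c z := by
    show deriv^[3] (u t) x = _
    rw [show deriv^[3] (u t) = deriv (deriv (deriv (u t))) from rfl, d3]
  have hp5 : pdxn 5 u t x = g5 μ c z := by
    show deriv^[5] (u t) x = _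
    rw [show deriv^[5] (u t) = deriv (deriv (deriv (deriv (deriv (u t))))) from rfl, d5]
  have hpt : pdt u t x = g1 μ c z * -k := by
    show deriv (fun s => u s x) t = _
    have hinner : HasDerivAt (fun s : ℝ => x - k * s) (-k) t := by
      simpa using ((hasDerivAt_id t).const_mul k).const_sub x
    exact ((hasDerivAt_gardnerQ hμ hc (x - k * t)).comp t hinner).deriv
  have hu : u t x = gardnerQ μ c z := rfl
  rw [hpt, hpx, hp2, hp3, hp5, hu]
  have key := g1_sq hμ hc z
  rw [g5, g3, g2, hk_def]
  linear_combination (-2 * g1 μ c z) * key
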